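/- For n >= 5, in any collection of g = (n-1)(n-2)/2 vectors in Z^{C(n,2)} each of which is the signed characteristic vector of an oriented triangle of K_n, if the collection is linearly independent and all pairwise inner products are nonpositive, then a contradiction follows; i.e., no such collection forms a basis of the flow lattice of K_n with pairwise nonpositive inner products. -/

import Mathlib

open Matrix

/-- The signed characteristic vector of the directed edge `(x, y)`, with coordinates
indexed by the edges of the complete graph `K_n` (ordered pairs `p` with `p.1 < p.2`,
oriented from the smaller to the larger endpoint). -/
def dirVec (n : ℕ) (x y : Fin n) : {p : Fin n × Fin n // p.1 < p.2} → ℤ :=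
  fun e => if e.1 = (x, y) then 1 else if e.1 = (y, x) then -1 else 0

/-- The signed characteristic vector of the oriented triangle `a → b → c → a`. -/
def triVec (n : ℕ) (a b c : Fin n) : {p : Fin n × Fin n // p.1 < p.2} → ℤ :=
  fun e => dirVec n a b e + dirVec n b c e + dirVec n c a e

abbrev Edge (n : ℕ) := {p : Fin n × Fin n // p.1 < p.2}

lemma dirVec_eq_single {n : ℕ} {x y : Fin n} (h : x < y) :
    dirVec n x y = Pi.single (⟨(x,y),h⟩ : Edge n) 1 := by
  funext e
  rcases e with ⟨⟨u,v⟩, huv⟩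
  simp only [dirVec, Pi.single_apply, Subtype.mk.injEq]
  have hne : ¬ ((u,v) = (y,x)) := by
    rintro h'
    rw [Prod.mk.injEq] at h'
    obtain ⟨rfl, rfl⟩ := h'
    exact absurd h (not_lt.mpr (le_of_lt huv))
  simp [hne]

lemma dirVec_eq_single' {n : ℕ} {x y : Fin n} (h : y < x) :
    dirVec n x y = -Pi.single (⟨(y,x),h⟩ : Edge n) 1 := by
  funext e
  rcases e with ⟨⟨u,v⟩, huv⟩
  simp only [dirVec, Pi.neg_apply, Pi.single_apply, Subtype.mk.injEq]
  have hne : ¬ ((u,v) = (x,y)) := by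
    rintro h'
    rw [Prod.mk.injEq] at h'
    obtain ⟨rfl, rfl⟩ := h'
    exact absurd h (not_lt.mpr (le_of_lt huv))
  simp only [hne, if_false]
  split_ifs <;> simp

lemma dirVec_dot {n : ℕ} (v : Edge n → ℤ) {x y : Fin n} (h : x < y) :
    dirVec n x y ⬝ᵥ v = v ⟨(x,y),h⟩ := by
  rw [dirVec_eq_single h, single_dotProduct, one_mul]

lemma dirVec_dot' {n : ℕ} (v : Edge n → ℤ) {x y : Fin n} (h : y < x) :
    dirVec n x y ⬝ᵥ v = -v ⟨(y,x),h⟩ := by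
  rw [dirVec_eq_single' h, neg_dotProduct, single_dotProduct, one_mul]

lemma dirVec_dot_dirVec {n : ℕ} {x y : Fin n} (hxy : x ≠ y) (u w : Fin n) :
    dirVec n x y ⬝ᵥ dirVec n u w =
      if (u,w) = (x,y) then 1 else if (u,w) = (y,x) then -1 else 0 := by
  rcases hxy.lt_or_gt with h | h
  · rw [dirVec_dot _ h]
    simp only [dirVec]
    split_ifs <;> simp_all [Prod.ext_iff, Fin.ext_iff] <;> omega
  · rw [dirVec_dot' _ h]
    simp only [dirVec]
    split_ifs <;> simp_all [Prod.ext_iff, Fin.ext_iff] <;> omega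

lemma triVec_dot_self {n : ℕ} {a b c : Fin n} (hab : a ≠ b) (hbc : b ≠ c) (hac : a ≠ c) :
    triVec n a b c ⬝ᵥ triVec n a b c = 3 := by
  have h1 : triVec n a b c = dirVec n a b + dirVec n b c + dirVec n c a := rfl
  rw [h1]
  simp only [add_dotProduct, dotProduct_add, dirVec_dot_dirVec hab,
    dirVec_dot_dirVec hbc, dirVec_dot_dirVec (Ne.symm hac)]
  norm_num [Prod.mk.injEq, hab, hbc, hac, Ne.symm hab, Ne.symm hbc, Ne.symm hac]

lemma triVec_val {n : ℕ} {a b c : Fin n} (hab : a ≠ b) (hbc : b ≠ c) (hac : a ≠ c)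
    (e : Edge n) : triVec n a b c e = 1 ∨ triVec n a b c e = 0 ∨ triVec n a b c e = -1 := by
  rcases e with ⟨⟨u,v⟩, huv⟩
  replace huv : u < v := huv
  simp only [ne_eq, Fin.ext_iff] at hab hbc hac
  simp only [triVec, dirVec, Prod.mk.injEq, Fin.ext_iff]
  split_ifs <;> omega

lemma triVec_mem {n : ℕ} {a b c : Fin n} (e : Edge n) (h : triVec n a b c e ≠ 0) :
    (e.1.1 = a ∨ e.1.1 = b ∨ e.1.1 = c) ∧ (e.1.2 = a ∨ e.1.2 = b ∨ e.1.2 = c) := by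
  rcases e with ⟨⟨u,v⟩, huv⟩
  replace huv : u < v := huv
  simp only [triVec, dirVec, Prod.mk.injEq, Fin.ext_iff] at h
  simp only [Fin.ext_iff]
  split_ifs at h <;> omega

lemma dirVec_swap {n : ℕ} (x y : Fin n) : dirVec n y x = -dirVec n x y := by
  funext e
  rcases e with ⟨⟨u,v⟩, huv⟩
  replace huv : u < v := huv
  simp only [dirVec, Pi.neg_apply, Prod.mk.injEq, Fin.ext_iff]
  split_ifs <;> omega

lemma triVec_cyc {n : ℕ} (a b c : Fin n) : triVec n a b c = triVec n b c a := by
  funext e; simp only [triVec]; ring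

lemma triVec_swap {n : ℕ} (a b c : Fin n) : triVec n a c b = -triVec n a b c := by
  funext e
  have h1 : dirVec n a c e = -dirVec n c a e := congrFun (dirVec_swap c a) e
  have h2 : dirVec n c b e = -dirVec n b c e := congrFun (dirVec_swap b c) e
  have h3 : dirVec n b a e = -dirVec n a b e := congrFun (dirVec_swap a b) e
  simp only [triVec, Pi.neg_apply, h1, h2, h3]
  ring

def vstar (n : ℕ) (v : Fin n) : Edge n → ℤ :=
  fun e => (if e.1.1 = v then 1 else 0) - (if e.1.2 = v then 1 else 0)

lemma dirVec_dot_vstar {n : ℕ} {x y : Fin n} (hxy : x ≠ y) (v : Fin n) :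
    dirVec n x y ⬝ᵥ vstar n v = (if x = v then 1 else 0) - (if y = v then 1 else 0) := by
  rcases hxy.lt_or_gt with h | h
  · rw [dirVec_dot _ h]; simp [vstar]
  · rw [dirVec_dot' _ h]; simp [vstar]; try ring

lemma triVec_dot_vstar {n : ℕ} {a b c : Fin n} (hab : a ≠ b) (hbc : b ≠ c) (hac : a ≠ c)
    (v : Fin n) : triVec n a b c ⬝ᵥ vstar n v = 0 := by
  rw [show triVec n a b c = dirVec n a b + dirVec n b c + dirVec n c a from rfl]
  simp only [add_dotProduct, dirVec_dot_vstar hab, dirVec_dot_vstar hbc,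
    dirVec_dot_vstar (Ne.symm hac)]
  ring

lemma one_le_mul_self {z : ℤ} (hz : z ≠ 0) : 1 ≤ z * z := by
  rcases lt_or_gt_of_ne hz with h | h <;> nlinarith

lemma per_edge {g : ℕ} (x : Fin g → ℤ) (hval : ∀ i, x i = 1 ∨ x i = 0 ∨ x i = -1)
    (hprod : ∀ i j, i ≠ j → x i * x j ≤ 0) :
    (∑ i, x i) * (∑ i, x i) + ∑ i, x i * x i ≤ 2 := by
  classical
  set T := Finset.univ.filter (fun i => x i ≠ 0) with hT
  have hsum : ∑ i, x i = ∑ i ∈ T, x i := (Finset.sum_filter_ne_zero _).symm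
  have hzero : ∀ i ∈ Finset.univ, i ∉ T → x i * x i = 0 := by
    intro i _ hiT
    have : x i = 0 := by simpa [hT] using hiT
    simp [this]
  have hsum2 : ∑ i, x i * x i = ∑ i ∈ T, x i * x i :=
    (Finset.sum_subset (Finset.filter_subset _ _) hzero).symm
  have hsq : ∀ i ∈ T, x i * x i = 1 := by
    intro i hi
    have hne : x i ≠ 0 := (Finset.mem_filter.1 hi).2
    rcases hval i with h|h|h <;> simp [h] at hne ⊢
  have hcardsum : ∑ i ∈ T, x i * x i = T.card := by
    rw [Finset.sum_congr rfl hsq]; simp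
  have hcard : T.card ≤ 2 := by
    by_contra hc
    push_neg at hc
    obtain ⟨U, hUT, hU3⟩ := Finset.exists_subset_card_eq (s := T) (n := 3) (by omega)
    obtain ⟨i, j, k, hij, hik, hjk, rfl⟩ := Finset.card_eq_three.1 hU3
    have hi : x i ≠ 0 := (Finset.mem_filter.1 (hUT (by simp))).2
    have hj : x j ≠ 0 := (Finset.mem_filter.1 (hUT (by simp))).2
    have hk : x k ≠ 0 := (Finset.mem_filter.1 (hUT (by simp))).2
    have p1 := hprod i j hij
    have p2 := hprod i k hik
    have p3 := hprod j k hjk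
    rcases hval i with h1|h1|h1 <;> rcases hval j with h2|h2|h2 <;>
      rcases hval k with h3|h3|h3 <;> simp_all
  rw [hsum, hsum2, hcardsum]
  interval_cases h : T.card
  · have : T = ∅ := Finset.card_eq_zero.1 h
    simp [this]
  · obtain ⟨i, hTi⟩ := Finset.card_eq_one.1 h
    have hi : x i * x i = 1 := hsq i (by simp [hTi])
    rw [hTi, Finset.sum_singleton]
    omega
  · obtain ⟨i, j, hij, hTij⟩ := Finset.card_eq_two.1 h
    have hiT : i ∈ T := by rw [hTij]; exact Finset.mem_insert_self _ _
    have hjT : j ∈ T := by rw [hTij]; simp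
    have hi : x i ≠ 0 := (Finset.mem_filter.1 hiT).2
    have hj : x j ≠ 0 := (Finset.mem_filter.1 hjT).2
    have hp := hprod i j hij
    rw [hTij, Finset.sum_pair hij]
    rcases hval i with h1|h1|h1 <;> rcases hval j with h2|h2|h2 <;> simp_all <;> norm_num

lemma triVec_perm {n : ℕ} {a b c a' b' c' : Fin n}
    (hab' : a' ≠ b') (hbc' : b' ≠ c') (hac' : a' ≠ c')
    (h : ({a',b',c'} : Finset (Fin n)) = {a,b,c}) :
    triVec n a' b' c' = triVec n a b c ∨ triVec n a' b' c' = -triVec n a b c := by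
  have ha' : a' = a ∨ a' = b ∨ a' = c := by
    have : a' ∈ ({a,b,c} : Finset (Fin n)) := h ▸ (by simp)
    simpa using this
  have hb' : b' = a ∨ b' = b ∨ b' = c := by
    have : b' ∈ ({a,b,c} : Finset (Fin n)) := h ▸ (by simp)
    simpa using this
  have hc' : c' = a ∨ c' = b ∨ c' = c := by
    have : c' ∈ ({a,b,c} : Finset (Fin n)) := h ▸ (by simp)
    simpa using this
  rcases ha' with rfl|rfl|rfl <;> rcases hb' with rfl|rfl|rfl <;> rcases hc' with rfl|rfl|rfl <;>
    first
      | exact absurd rfl hab'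
      | exact absurd rfl hbc'
      | exact absurd rfl hac'
      | exact Or.inl rfl
      | exact Or.inl (triVec_cyc _ _ _)
      | exact Or.inl ((triVec_cyc _ _ _).symm)
      | (left; rw [triVec_cyc _ _ _, triVec_cyc _ _ _]; done)
      | (right; rw [triVec_swap _ _ _]; done)
      | (right; rw [triVec_swap _ _ _, triVec_cyc _ _ _]; done)
      | (right; rw [triVec_swap _ _ _, triVec_cyc _ _ _, triVec_cyc _ _ _]; done)

lemma triple_eq {n : ℕ} {a b c a' b' c' : Fin n}
    (hab : a ≠ b) (hbc : b ≠ c) (hac : a ≠ c)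
    (hab' : a' ≠ b') (hbc' : b' ≠ c') (hac' : a' ≠ c')
    (e e' : Edge n) (hee' : e ≠ e')
    (h1 : triVec n a b c e ≠ 0) (h2 : triVec n a' b' c' e ≠ 0)
    (h3 : triVec n a b c e' ≠ 0) (h4 : triVec n a' b' c' e' ≠ 0) :
    ({a',b',c'} : Finset (Fin n)) = {a,b,c} := by
  classical
  obtain ⟨hu1, hu2⟩ := triVec_mem e h1
  obtain ⟨hu1', hu2'⟩ := triVec_mem e h2
  obtain ⟨hv1, hv2⟩ := triVec_mem e' h3
  obtain ⟨hv1', hv2'⟩ := triVec_mem e' h4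
  set T : Finset (Fin n) := {a,b,c} with hTdef
  set T' : Finset (Fin n) := {a',b',c'} with hTdef'
  have m1 : e.1.1 ∈ T := by rcases hu1 with h|h|h <;> simp [hTdef, h]
  have m2 : e.1.2 ∈ T := by rcases hu2 with h|h|h <;> simp [hTdef, h]
  have m3 : e'.1.1 ∈ T := by rcases hv1 with h|h|h <;> simp [hTdef, h]
  have m4 : e'.1.2 ∈ T := by rcases hv2 with h|h|h <;> simp [hTdef, h]
  have m1' : e.1.1 ∈ T' := by rcases hu1' with h|h|h <;> simp [hTdef', h]
  have m2' : e.1.2 ∈ T' := by rcases hu2' with h|h|h <;> simp [hTdef', h]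
  have m3' : e'.1.1 ∈ T' := by rcases hv1' with h|h|h <;> simp [hTdef', h]
  have m4' : e'.1.2 ∈ T' := by rcases hv2' with h|h|h <;> simp [hTdef', h]
  have hcT : T.card = 3 := Finset.card_eq_three.2 ⟨a,b,c,hab,hac,hbc,rfl⟩
  have hcT' : T'.card = 3 := Finset.card_eq_three.2 ⟨a',b',c',hab',hac',hbc',rfl⟩
  have l1 : e.1.1 < e.1.2 := e.2
  have l2 : e'.1.1 < e'.1.2 := e'.2
  have key : ∃ p q r : Fin n, p ≠ q ∧ p ≠ r ∧ q ≠ r ∧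
      p ∈ T ∧ q ∈ T ∧ r ∈ T ∧ p ∈ T' ∧ q ∈ T' ∧ r ∈ T' := by
    by_cases hv : e'.1.1 = e.1.1 ∨ e'.1.1 = e.1.2
    · by_cases hw : e'.1.2 = e.1.1 ∨ e'.1.2 = e.1.2
      · exfalso
        apply hee'
        have hfst : e.1.1 = e'.1.1 ∧ e.1.2 = e'.1.2 := by
          rcases hv with h|h <;> rcases hw with h'|h' <;>
            first
              | exact ⟨h.symm, h'.symm⟩
              | (exfalso; simp only [Fin.ext_iff] at h h'; omega)
        exact Subtype.ext (Prod.ext hfst.1 hfst.2)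
      · push_neg at hw
        exact ⟨e.1.1, e.1.2, e'.1.2, ne_of_lt l1, Ne.symm hw.1, Ne.symm hw.2, m1, m2, m4, m1', m2', m4'⟩
    · push_neg at hv
      exact ⟨e.1.1, e.1.2, e'.1.1, ne_of_lt l1, Ne.symm hv.1, Ne.symm hv.2, m1, m2, m3, m1', m2', m3'⟩
  obtain ⟨p,q,r, hpq, hpr, hqr, hpT, hqT, hrT, hpT', hqT', hrT'⟩ := key
  have hU : ({p,q,r} : Finset (Fin n)).card = 3 := Finset.card_eq_three.2 ⟨p,q,r,hpq,hpr,hqr,rfl⟩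
  have hsub : ({p,q,r} : Finset (Fin n)) ⊆ T :=
    Finset.insert_subset_iff.2 ⟨hpT, Finset.insert_subset_iff.2 ⟨hqT, by simpa using hrT⟩⟩
  have hsub' : ({p,q,r} : Finset (Fin n)) ⊆ T' :=
    Finset.insert_subset_iff.2 ⟨hpT', Finset.insert_subset_iff.2 ⟨hqT', by simpa using hrT'⟩⟩
  have e1 : ({p,q,r} : Finset (Fin n)) = T := Finset.eq_of_subset_of_card_le hsub (by omega)
  have e2 : ({p,q,r} : Finset (Fin n)) = T' := Finset.eq_of_subset_of_card_le hsub' (by omega)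
  exact e2.symm.trans e1

def edgeEquiv (n : ℕ) : Edge n ≃ Σ y : Fin n, {x : Fin n // x < y} where
  toFun e := ⟨e.1.2, e.1.1, e.2⟩
  invFun s := ⟨(s.2.1, s.1), s.2.2⟩
  left_inv e := rfl
  right_inv s := rfl

lemma card_edge (n : ℕ) : (Fintype.card (Edge n)) * 2 = n * (n - 1) := by
  have h1 : Fintype.card (Edge n) = ∑ y : Fin n, Fintype.card {x : Fin n // x < y} := by
    rw [Fintype.card_congr (edgeEquiv n)]
    exact Fintype.card_sigma
  have h2 : ∀ y : Fin n, Fintype.card {x : Fin n // x < y} = (y : ℕ) := by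
    intro y
    rw [Fintype.card_congr (Equiv.subtypeEquivRight (fun x => by simp [Set.mem_Iio] : ∀ x : Fin n, x < y ↔ x ∈ Set.Iio y))]
    rw [← Set.toFinset_card, Set.toFinset_Iio]; exact Fin.card_Iio y
  rw [h1, Finset.sum_congr rfl (fun y _ => h2 y)]
  rw [Fin.sum_univ_eq_sum_range (fun i => i) n]
  exact Finset.sum_range_id_mul_two n

/-- For `n ≥ 5`, no collection of `g = (n-1)(n-2)/2` signed characteristic vectors of
oriented triangles of `K_n` is linearly independent with pairwise nonpositive inner
products; i.e. `K_n` admits no circuit `M`-basis consisting entirely of triangles. -/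
theorem stmt_12 (n g : ℕ) (hn : 5 ≤ n) (hg : g = (n - 1) * (n - 2) / 2)
    (f : Fin g → ({p : Fin n × Fin n // p.1 < p.2} → ℤ))
    (htri : ∀ i, ∃ a b c : Fin n, a ≠ b ∧ b ≠ c ∧ a ≠ c ∧ f i = triVec n a b c)
    (hli : LinearIndependent ℤ f)
    (hnp : ∀ i j, i ≠ j → f i ⬝ᵥ f j ≤ 0) :
    False := by
  classical
  choose a b c hab hbc hac hf using htri
  set S : Edge n → ℤ := fun e => ∑ i, f i e with hSdef
  have hg2 : g * 2 = (n - 1) * (n - 2) := by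
    rw [hg]
    apply Nat.div_mul_cancel
    have h' : (n-1) = (n-2)+1 := by omega
    rw [h', mul_comm]
    exact even_iff_two_dvd.mp (Nat.even_mul_succ_self (n-2))
  have hgpos : 0 < g := by
    have h12 : 12 ≤ (n-1)*(n-2) := Nat.mul_le_mul (by omega : 4 ≤ n-1) (by omega : 3 ≤ n-2)
    have : 12 ≤ g * 2 := hg2 ▸ h12
    omega
  have hval : ∀ i e, f i e = 1 ∨ f i e = 0 ∨ f i e = -1 := fun i e => by
    rw [hf i]; exact triVec_val (hab i) (hbc i) (hac i) e
  have hP : ∀ i j, i ≠ j → ∀ e, f i e * f j e ≤ 0 := by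
    intro i j hij e
    by_contra hpos
    push_neg at hpos
    have hie : f i e ≠ 0 := fun h => by simp [h] at hpos
    have hje : f j e ≠ 0 := fun h => by simp [h] at hpos
    have hdot := hnp i j hij
    have hsplit : f i ⬝ᵥ f j = f i e * f j e + ∑ e' ∈ Finset.univ.erase e, f i e' * f j e' := by
      rw [show f i ⬝ᵥ f j = ∑ e', f i e' * f j e' from rfl,
        ← Finset.add_sum_erase _ _ (Finset.mem_univ e)]
    rw [hsplit] at hdot
    have hrest : ∑ e' ∈ Finset.univ.erase e, f i e' * f j e' < 0 := by linarith
    obtain ⟨e', he'mem, hneg⟩ : ∃ e' ∈ Finset.univ.erase e, f i e' * f j e' < 0 := by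
      by_contra hall
      push_neg at hall
      exact absurd (Finset.sum_nonneg hall) (not_le.2 hrest)
    have hie' : f i e' ≠ 0 := fun h => by simp [h] at hneg
    have hje' : f j e' ≠ 0 := fun h => by simp [h] at hneg
    have hee' : e ≠ e' := fun h => (Finset.mem_erase.1 he'mem).1 h.symm
    have hset : ({a j, b j, c j} : Finset (Fin n)) = {a i, b i, c i} := by
      apply triple_eq (hab i) (hbc i) (hac i) (hab j) (hbc j) (hac j) e e' hee'
      · rw [← hf i]; exact hie
      · rw [← hf j]; exact hje
      · rw [← hf i]; exact hie'
      · rw [← hf j]; exact hje'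
    have hperm := triVec_perm (hab j) (hbc j) (hac j) hset
    rw [← hf i, ← hf j] at hperm
    rcases hperm with h | h
    · exact hij ((hli.injective h).symm)
    · rw [h] at hpos
      simp only [Pi.neg_apply] at hpos
      nlinarith [mul_self_nonneg (f i e)]
  have hbound : ∀ e : Edge n, S e * S e + ∑ i, f i e * f i e ≤ 2 := fun e =>
    per_edge (fun i => f i e) (fun i => hval i e) (fun i j hij => hP i j hij e)
  have hnorm : ∀ i, ∑ e : Edge n, f i e * f i e = 3 := by
    intro i
    have h := triVec_dot_self (hab i) (hbc i) (hac i)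
    rw [← hf i] at h
    exact h
  have htot : (∑ e : Edge n, S e * S e) + 3 * (g:ℤ) ≤ 2 * (Fintype.card (Edge n) : ℤ) := by
    have h1 : ∑ e : Edge n, (S e * S e + ∑ i, f i e * f i e) ≤ ∑ _e : Edge n, (2:ℤ) :=
      Finset.sum_le_sum (fun e _ => hbound e)
    rw [Finset.sum_add_distrib, Finset.sum_comm] at h1
    simp only [hnorm, Finset.sum_const, Finset.card_univ, Fintype.card_fin,
      nsmul_eq_mul] at h1
    linarith
  have hSsq : ∑ e : Edge n, S e * S e ≤ 2 := by
    have hE := card_edge n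
    zify [show 1 ≤ n from by omega, show 2 ≤ n from by omega] at hE hg2
    have h5 : (5:ℤ) ≤ (n:ℤ) := by exact_mod_cast hn
    nlinarith [htot, hE, hg2, h5,
      mul_nonneg (show (0:ℤ) ≤ (n:ℤ)-5 by linarith) (show (0:ℤ) ≤ (n:ℤ)-2 by linarith)]
  have hSne : S ≠ 0 := by
    intro h0
    have hsum0 : ∑ i, (fun _ : Fin g => (1:ℤ)) i • f i = 0 := by
      funext e
      have h0e : ∑ i, f i e = 0 := congrFun h0 e
      simp only [one_smul, Finset.sum_apply, Pi.zero_apply]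
      exact h0e
    have := Fintype.linearIndependent_iff.1 hli (fun _ => 1) hsum0 ⟨0, hgpos⟩
    exact one_ne_zero this
  have hflow : ∀ v : Fin n, ∑ e : Edge n, S e * vstar n v e = 0 := by
    intro v
    calc ∑ e : Edge n, S e * vstar n v e
        = ∑ e : Edge n, ∑ i, f i e * vstar n v e := by
          apply Finset.sum_congr rfl
          intro e _
          exact Finset.sum_mul _ _ _
      _ = ∑ i, ∑ e : Edge n, f i e * vstar n v e := Finset.sum_comm
      _ = 0 := Finset.sum_eq_zero (fun i _ => by
          rw [show ∑ e : Edge n, f i e * vstar n v e = f i ⬝ᵥ vstar n v from rfl, hf i]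
          exact triVec_dot_vstar (hab i) (hbc i) (hac i) v)
  obtain ⟨e, he⟩ : ∃ e, S e ≠ 0 := by
    by_contra hall
    push_neg at hall
    exact hSne (funext hall)
  have extract : ∀ v : Fin n, vstar n v e ≠ 0 → ∃ e', e' ≠ e ∧ S e' ≠ 0 ∧ vstar n v e' ≠ 0 := by
    intro v hv
    have h0 := hflow v
    rw [← Finset.add_sum_erase _ _ (Finset.mem_univ e)] at h0
    have hne : ∑ e' ∈ Finset.univ.erase e, S e' * vstar n v e' ≠ 0 := by
      intro hz
      rw [hz, add_zero] at h0
      exact (mul_ne_zero he hv) h0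
    obtain ⟨e', he'mem, he'⟩ := Finset.exists_ne_zero_of_sum_ne_zero hne
    exact ⟨e', (Finset.mem_erase.1 he'mem).1,
      fun h => he' (by rw [h, zero_mul]), fun h => he' (by rw [h, mul_zero])⟩
  have l1 : e.1.1 < e.1.2 := e.2
  have hx : vstar n e.1.1 e ≠ 0 := by
    simp [vstar, ne_of_gt l1]
  have hy : vstar n e.1.2 e ≠ 0 := by
    simp [vstar, ne_of_lt l1]
  obtain ⟨e1, he1ne, he1S, he1v⟩ := extract e.1.1 hx
  obtain ⟨e2, he2ne, he2S, he2v⟩ := extract e.1.2 hy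
  have he21 : e2 = e1 := by
    by_contra hne21
    have h1 : ∑ e' ∈ ({e, e1, e2} : Finset (Edge n)), S e' * S e' ≤ ∑ e' : Edge n, S e' * S e' :=
      Finset.sum_le_sum_of_subset_of_nonneg (Finset.subset_univ _) (fun e' _ _ => mul_self_nonneg _)
    have h2 : ∑ e' ∈ ({e, e1, e2} : Finset (Edge n)), S e' * S e'
        = S e * S e + (S e1 * S e1 + S e2 * S e2) := by
      rw [Finset.sum_insert (by simp [Ne.symm he1ne, Ne.symm he2ne]),
        Finset.sum_insert (by simp [Ne.symm hne21]), Finset.sum_singleton]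
    linarith [one_le_mul_self he, one_le_mul_self he1S, one_le_mul_self he2S, hSsq]
  rw [he21] at he2v
  have hvx : e1.1.1 = e.1.1 ∨ e1.1.2 = e.1.1 := by
    by_contra hc
    push_neg at hc
    exact he1v (by simp [vstar, if_neg hc.1, if_neg hc.2])
  have hvy : e1.1.1 = e.1.2 ∨ e1.1.2 = e.1.2 := by
    by_contra hc
    push_neg at hc
    exact he2v (by simp [vstar, if_neg hc.1, if_neg hc.2])
  have l3 : e1.1.1 < e1.1.2 := e1.2
  have hne1 : ¬(e1.1.1 = e.1.1 ∧ e1.1.2 = e.1.2) := by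
    rintro ⟨h1, h2⟩
    exact he1ne (Subtype.ext (Prod.ext h1 h2))
  rcases hvx with h | h <;> rcases hvy with h' | h' <;>
    (simp only [Fin.ext_iff] at h h' hne1; omega)
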